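/- Let N, d be positive integers and let U be a unitary matrix indexed by Fin N × Fin d (an operator on ℂ^N ⊗ ℂ^d). Call a nonzero matrix Q : Matrix (Fin d) (Fin d) ℂ a commutative-subspace projection for U if Q is an orthogonal projection (Qᴴ = Q and Q*Q = Q), (1 ⊗ Q) * U = U * (1 ⊗ Q), and the compressed algebra Q A(U) Q is commutative, i.e. for all a, b ∈ A(U), (Q*a*Q)*(Q*b*Q) = (Q*b*Q)*(Q*a*Q). Then there exists an orthogonal projection P_c : Matrix (Fin d) (Fin d) ℂ (possibly zero) such that: (i) (1 ⊗ P_c) * U = U * (1 ⊗ P_c) and for all a, b ∈ A(U), (P_c*a*P_c)*(P_c*b*P_c) = (P_c*b*P_c)*(P_c*a*P_c); (ii) every commutative-subspace projection Q for U satisfies Q ≤ P_c, i.e. P_c * Q = Q; (iii) there is no commutative-subspace projection Q for U with Q * P_c = 0 (equivalently, Q ≤ 1 − P_c). -/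

import Mathlib

open scoped Kronecker
open Matrix

/-- The slice `M(f,g)` of an operator on `ℂ^N ⊗ ℂ^d`: the partial trace `Tr_{|g⟩⟨f|}[M]`,
given by `M(f,g) k l = ∑ i j, conj (f i) * g j * M (i,k) (j,l)`. -/
noncomputable def envSlice {N d : ℕ} (M : Matrix (Fin N × Fin d) (Fin N × Fin d) ℂ)
    (f g : Fin N → ℂ) : Matrix (Fin d) (Fin d) ℂ :=
  Matrix.of fun k l => ∑ i, ∑ j, (starRingEnd ℂ) (f i) * g j * M (i, k) (j, l)

/-- The Environment Algebra `A(U)`: the unital star-subalgebra generated by all slices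
`U(f,g)` and `Uᴴ(f,g)`. -/
noncomputable def envAlg {N d : ℕ} (U : Matrix (Fin N × Fin d) (Fin N × Fin d) ℂ) :
    StarSubalgebra ℂ (Matrix (Fin d) (Fin d) ℂ) :=
  StarAlgebra.adjoin ℂ
    ({A | ∃ f g, A = envSlice U f g} ∪ {A | ∃ f g, A = envSlice Uᴴ f g})

/-- The Environment Right-Action Algebra `A_r(U)`: the unital star-subalgebra generated by all
products `Uᴴ(f₁,g₁) * U(f₂,g₂)`. -/
noncomputable def envActAlg {N d : ℕ} (U : Matrix (Fin N × Fin d) (Fin N × Fin d) ℂ) :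
    StarSubalgebra ℂ (Matrix (Fin d) (Fin d) ℂ) :=
  StarAlgebra.adjoin ℂ
    {A | ∃ f₁ g₁ f₂ g₂, A = envSlice Uᴴ f₁ g₁ * envSlice U f₂ g₂}

/-- A commutative-subspace projection for `U`: a nonzero orthogonal projection `Q` of the
environment such that `1 ⊗ Q` commutes with `U` and the compressed algebra `Q A(U) Q` is
commutative. -/
def IsCommSubProj {N d : ℕ} (U : Matrix (Fin N × Fin d) (Fin N × Fin d) ℂ)
    (Q : Matrix (Fin d) (Fin d) ℂ) : Prop :=
  Q ≠ 0 ∧ Qᴴ = Q ∧ Q * Q = Q ∧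
    ((1 : Matrix (Fin N) (Fin N) ℂ) ⊗ₖ Q) * U = U * ((1 : Matrix (Fin N) (Fin N) ℂ) ⊗ₖ Q) ∧
    ∀ a ∈ envAlg U, ∀ b ∈ envAlg U,
      (Q * a * Q) * (Q * b * Q) = (Q * b * Q) * (Q * a * Q)

/- ### Auxiliary lemmas -/

lemma envSlice_kron_mul {N d : ℕ} (U : Matrix (Fin N × Fin d) (Fin N × Fin d) ℂ)
    (Q : Matrix (Fin d) (Fin d) ℂ) (f g : Fin N → ℂ) :
    envSlice (((1 : Matrix (Fin N) (Fin N) ℂ) ⊗ₖ Q) * U) f g = Q * envSlice U f g := by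
  ext k l
  simp only [envSlice, Matrix.mul_apply, Matrix.of_apply, Fintype.sum_prod_type,
    Matrix.kroneckerMap_apply, Matrix.one_apply]
  simp only [ite_mul, one_mul, zero_mul, Finset.mem_univ, if_true]
  conv_lhs => enter [2, x, 2, x_1]; rw [Finset.sum_comm]
  simp only [Finset.sum_ite_eq, Finset.mem_univ, if_true, Finset.mul_sum]
  conv_rhs => rw [Finset.sum_comm]
  conv_rhs => enter [2, i]; rw [Finset.sum_comm]
  refine Finset.sum_congr rfl fun i _ => Finset.sum_congr rfl fun j _ =>
    Finset.sum_congr rfl fun n _ => ?_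
  ring

lemma envSlice_mul_kron {N d : ℕ} (U : Matrix (Fin N × Fin d) (Fin N × Fin d) ℂ)
    (Q : Matrix (Fin d) (Fin d) ℂ) (f g : Fin N → ℂ) :
    envSlice (U * ((1 : Matrix (Fin N) (Fin N) ℂ) ⊗ₖ Q)) f g = envSlice U f g * Q := by
  ext k l
  simp only [envSlice, Matrix.mul_apply, Matrix.of_apply, Fintype.sum_prod_type,
    Matrix.kroneckerMap_apply, Matrix.one_apply]
  simp only [mul_ite, mul_one, mul_zero, ite_mul, zero_mul, one_mul, Finset.mul_sum]
  conv_lhs => enter [2, x, 2, x_1]; rw [Finset.sum_comm]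
  simp only [Finset.sum_ite_eq', Finset.mem_univ, if_true]
  simp only [Finset.sum_mul]
  conv_rhs => rw [Finset.sum_comm]
  conv_rhs => enter [2, i]; rw [Finset.sum_comm]
  refine Finset.sum_congr rfl fun i _ => Finset.sum_congr rfl fun j _ =>
    Finset.sum_congr rfl fun n _ => ?_
  ring

lemma envSlice_single {N d : ℕ} (U : Matrix (Fin N × Fin d) (Fin N × Fin d) ℂ)
    (i j : Fin N) (k l : Fin d) :
    envSlice U (Pi.single i 1) (Pi.single j 1) k l = U (i, k) (j, l) := by
  simp [envSlice, Pi.single_apply, apply_ite (starRingEnd ℂ), ite_mul, mul_ite]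

lemma kron_one_conjTranspose {N d : ℕ} (Q : Matrix (Fin d) (Fin d) ℂ) :
    (((1 : Matrix (Fin N) (Fin N) ℂ) ⊗ₖ Q))ᴴ = (1 : Matrix (Fin N) (Fin N) ℂ) ⊗ₖ Qᴴ := by
  ext ⟨i, k⟩ ⟨j, l⟩
  simp [Matrix.conjTranspose_apply, Matrix.kroneckerMap_apply, Matrix.one_apply,
    apply_ite (starRingEnd ℂ), eq_comm]

lemma kron_comm_iff {N d : ℕ} (U : Matrix (Fin N × Fin d) (Fin N × Fin d) ℂ)
    (Q : Matrix (Fin d) (Fin d) ℂ) :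
    ((1 : Matrix (Fin N) (Fin N) ℂ) ⊗ₖ Q) * U = U * ((1 : Matrix (Fin N) (Fin N) ℂ) ⊗ₖ Q) ↔
      ∀ f g, Q * envSlice U f g = envSlice U f g * Q := by
  constructor
  · intro h f g
    rw [← envSlice_kron_mul, h, envSlice_mul_kron]
  · intro h
    ext ⟨i, k⟩ ⟨j, l⟩
    have h1 : envSlice (((1 : Matrix (Fin N) (Fin N) ℂ) ⊗ₖ Q) * U)
          (Pi.single i 1) (Pi.single j 1) k l
        = envSlice (U * ((1 : Matrix (Fin N) (Fin N) ℂ) ⊗ₖ Q))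
          (Pi.single i 1) (Pi.single j 1) k l := by
      rw [envSlice_kron_mul, envSlice_mul_kron, h]
    simpa [envSlice_single] using h1

lemma comm_envAlg {N d : ℕ} {U : Matrix (Fin N × Fin d) (Fin N × Fin d) ℂ}
    {Q : Matrix (Fin d) (Fin d) ℂ} (hQH : Qᴴ = Q)
    (hc : ((1 : Matrix (Fin N) (Fin N) ℂ) ⊗ₖ Q) * U = U * ((1 : Matrix (Fin N) (Fin N) ℂ) ⊗ₖ Q)) :
    ∀ m ∈ envAlg U, Q * m = m * Q := by
  have hc' : ((1 : Matrix (Fin N) (Fin N) ℂ) ⊗ₖ Q) * Uᴴ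
      = Uᴴ * ((1 : Matrix (Fin N) (Fin N) ℂ) ⊗ₖ Q) := by
    have := congrArg Matrix.conjTranspose hc
    rw [Matrix.conjTranspose_mul, Matrix.conjTranspose_mul, kron_one_conjTranspose, hQH] at this
    exact this.symm
  intro m hm
  induction hm using StarAlgebra.adjoin_induction with
  | mem x hx =>
    rcases hx with ⟨f, g, rfl⟩ | ⟨f, g, rfl⟩
    · exact (kron_comm_iff U Q).mp hc f g
    · exact (kron_comm_iff Uᴴ Q).mp hc' f g
  | algebraMap r => exact (Algebra.commutes r Q).symm
  | add x y hx hy ihx ihy => rw [mul_add, add_mul, ihx, ihy]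
  | mul x y hx hy ihx ihy => rw [← mul_assoc, ihx, mul_assoc, ihy, mul_assoc]
  | star x hx ih =>
    have := congrArg Matrix.conjTranspose ih
    rw [Matrix.conjTranspose_mul, Matrix.conjTranspose_mul, hQH] at this
    simpa [Matrix.star_eq_conjTranspose] using this.symm

lemma toEuclideanLin_mul' {d : ℕ} (A B : Matrix (Fin d) (Fin d) ℂ) :
    Matrix.toEuclideanLin (A * B)
      = (Matrix.toEuclideanLin A).comp (Matrix.toEuclideanLin B) := by
  rw [Matrix.toEuclideanLin_eq_toLin, Matrix.toLin_mul _ (PiLp.basisFun 2 ℂ (Fin d)) _]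

lemma exists_proj {d : ℕ} (K : Submodule ℂ (EuclideanSpace ℂ (Fin d))) :
    ∃ P : Matrix (Fin d) (Fin d) ℂ, Pᴴ = P ∧ P * P = P ∧
      (∀ v, Matrix.toEuclideanLin P v ∈ K) ∧
      (∀ v ∈ K, Matrix.toEuclideanLin P v = v) ∧
      ∀ m : Matrix (Fin d) (Fin d) ℂ,
        (∀ v ∈ K, Matrix.toEuclideanLin m v ∈ K) →
        (∀ v ∈ K, Matrix.toEuclideanLin mᴴ v ∈ K) → P * m = m * P := by
  set Pl : EuclideanSpace ℂ (Fin d) →ₗ[ℂ] EuclideanSpace ℂ (Fin d) :=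
    (K.subtypeL ∘L K.orthogonalProjectionOnto).toLinearMap with hPl
  refine ⟨Matrix.toEuclideanLin.symm Pl, ?_, ?_, ?_, ?_, ?_⟩
  all_goals
    have hP : Matrix.toEuclideanLin (Matrix.toEuclideanLin.symm Pl) = Pl :=
      Matrix.toEuclideanLin.apply_symm_apply Pl
  · apply Matrix.toEuclideanLin.injective
    rw [Matrix.toEuclideanLin_conjTranspose_eq_adjoint, hP]
    symm
    exact (LinearMap.eq_adjoint_iff Pl Pl).mpr fun x y => K.starProjection_isSymmetric x y
  · apply Matrix.toEuclideanLin.injective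
    rw [toEuclideanLin_mul', hP]
    refine LinearMap.ext fun v => ?_
    show Pl (Pl v) = Pl v
    exact congrArg Subtype.val
      (Submodule.orthogonalProjectionOnto_mem_subspace_eq_self (K.orthogonalProjectionOnto v))
  · intro v; rw [hP]; exact (K.orthogonalProjectionOnto v).2
  · intro v hv; rw [hP]
    exact Submodule.starProjection_eq_self_iff.mpr hv
  · intro m hm hm'
    have hfix : ∀ v ∈ K, Pl v = v := fun v hv =>
      Submodule.starProjection_eq_self_iff.mpr hv
    have hmem : ∀ v, Pl v ∈ K := fun v => (K.orthogonalProjectionOnto v).2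
    have hzero : ∀ v ∈ Kᗮ, Pl v = 0 := by
      intro v hv
      have : K.orthogonalProjectionOnto v = 0 :=
        Submodule.orthogonalProjectionOnto_apply_of_mem_orthogonal hv
      simp [hPl, this]
    apply Matrix.toEuclideanLin.injective
    rw [toEuclideanLin_mul', toEuclideanLin_mul', hP]
    refine LinearMap.ext fun v => ?_
    show Pl (Matrix.toEuclideanLin m v) = Matrix.toEuclideanLin m (Pl v)
    have hsplit : v = Pl v + (v - Pl v) := by abel
    have hperp : (v - Pl v) ∈ Kᗮ := Submodule.sub_starProjection_mem_orthogonal (K := K) v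
    have hmperp : Matrix.toEuclideanLin m (v - Pl v) ∈ Kᗮ := by
      rw [Submodule.mem_orthogonal']
      intro w hw
      rw [← LinearMap.adjoint_inner_right, ← Matrix.toEuclideanLin_conjTranspose_eq_adjoint]
      exact (Submodule.mem_orthogonal' K _).mp hperp _ (hm' w hw)
    calc Pl (Matrix.toEuclideanLin m v)
        = Pl (Matrix.toEuclideanLin m (Pl v)) + Pl (Matrix.toEuclideanLin m (v - Pl v)) := by
          rw [← map_add, ← map_add, ← hsplit]
      _ = Matrix.toEuclideanLin m (Pl v) := by
          rw [hzero _ hmperp, add_zero, hfix _ (hm _ (hmem v))]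

/-- The joint kernel of `(ab-ba)x` for `a, b, x` in the environment algebra: the maximal
classical subspace. -/
noncomputable def commKer {N d : ℕ} (U : Matrix (Fin N × Fin d) (Fin N × Fin d) ℂ) :
    Submodule ℂ (EuclideanSpace ℂ (Fin d)) :=
  ⨅ (a : envAlg U) (b : envAlg U) (x : envAlg U),
    LinearMap.ker (Matrix.toEuclideanLin
      (((a : Matrix (Fin d) (Fin d) ℂ) * (b : Matrix (Fin d) (Fin d) ℂ)
          - (b : Matrix (Fin d) (Fin d) ℂ) * (a : Matrix (Fin d) (Fin d) ℂ))
        * (x : Matrix (Fin d) (Fin d) ℂ)))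

lemma mem_commKer {N d : ℕ} (U : Matrix (Fin N × Fin d) (Fin N × Fin d) ℂ)
    (v : EuclideanSpace ℂ (Fin d)) :
    v ∈ commKer U ↔ ∀ a ∈ envAlg U, ∀ b ∈ envAlg U, ∀ x ∈ envAlg U,
      Matrix.toEuclideanLin ((a * b - b * a) * x) v = 0 := by
  simp only [commKer, Submodule.mem_iInf, LinearMap.mem_ker, Subtype.forall]

theorem exists_maximal_commutative_projection (N d : ℕ) (hN : 0 < N) (hd : 0 < d)
    (U : Matrix (Fin N × Fin d) (Fin N × Fin d) ℂ)
    (hU : Uᴴ * U = 1) (hU' : U * Uᴴ = 1) :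
    ∃ Pc : Matrix (Fin d) (Fin d) ℂ,
      Pcᴴ = Pc ∧ Pc * Pc = Pc ∧
      ((1 : Matrix (Fin N) (Fin N) ℂ) ⊗ₖ Pc) * U
        = U * ((1 : Matrix (Fin N) (Fin N) ℂ) ⊗ₖ Pc) ∧
      (∀ a ∈ envAlg U, ∀ b ∈ envAlg U,
        (Pc * a * Pc) * (Pc * b * Pc) = (Pc * b * Pc) * (Pc * a * Pc)) ∧
      (∀ Q : Matrix (Fin d) (Fin d) ℂ, IsCommSubProj U Q → Pc * Q = Q) ∧
      ¬ ∃ Q : Matrix (Fin d) (Fin d) ℂ, IsCommSubProj U Q ∧ Q * Pc = 0 := by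
  classical
  obtain ⟨Pc, hH, hIdem, hmemK, hfixK, hcom⟩ := exists_proj (commKer U)
  -- the kernel is invariant under the algebra
  have hinv : ∀ m ∈ envAlg U, ∀ v ∈ commKer U, Matrix.toEuclideanLin m v ∈ commKer U := by
    intro m hm v hv
    rw [mem_commKer]
    intro a ha b hb x hx
    rw [← LinearMap.comp_apply, ← toEuclideanLin_mul', mul_assoc]
    exact (mem_commKer U v).mp hv a ha b hb (x * m) (mul_mem hx hm)
  -- Pc commutes with the whole environment algebra
  have hPcComm : ∀ m ∈ envAlg U, Pc * m = m * Pc := by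
    intro m hm
    refine hcom m (hinv m hm) (hinv mᴴ ?_)
    simpa [Matrix.star_eq_conjTranspose] using star_mem hm
  -- slices belong to the algebra
  have hslice : ∀ f g, envSlice U f g ∈ envAlg U := fun f g =>
    StarAlgebra.subset_adjoin ℂ _ (Or.inl ⟨f, g, rfl⟩)
  -- Pc kills commutators
  have hPcKer : ∀ a ∈ envAlg U, ∀ b ∈ envAlg U, (a * b - b * a) * Pc = 0 := by
    intro a ha b hb
    apply Matrix.toEuclideanLin.injective
    rw [toEuclideanLin_mul', map_zero]
    refine LinearMap.ext fun v => ?_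
    have h1 := (mem_commKer U _).mp (hmemK v) a ha b hb 1 (one_mem _)
    rw [mul_one] at h1
    simpa using h1
  have hmax : ∀ Q : Matrix (Fin d) (Fin d) ℂ, IsCommSubProj U Q → Pc * Q = Q := by
    intro Q hQ
    obtain ⟨hQ0, hQH, hQidem, hQkron, hQcomp⟩ := hQ
    have hQcommAll := comm_envAlg hQH hQkron
    have habQ : ∀ a ∈ envAlg U, ∀ b ∈ envAlg U, a * b * Q = b * a * Q := by
      intro a ha b hb
      have hQaQ : ∀ c ∈ envAlg U, Q * c * Q = c * Q := by
        intro c hc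
        rw [hQcommAll c hc, mul_assoc c Q Q, hQidem]
      have hprod : ∀ c ∈ envAlg U, ∀ e ∈ envAlg U, (c * Q) * (e * Q) = c * e * Q := by
        intro c hc e he
        rw [mul_assoc c Q (e * Q), ← mul_assoc Q e Q, hQcommAll e he, mul_assoc e Q Q, hQidem,
          ← mul_assoc]
      have := hQcomp a ha b hb
      rw [hQaQ a ha, hQaQ b hb, hprod a ha b hb, hprod b hb a ha] at this
      exact this
    have hxQ : ∀ a ∈ envAlg U, ∀ b ∈ envAlg U, ∀ x ∈ envAlg U,
        ((a * b - b * a) * x) * Q = 0 := by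
      intro a ha b hb x hx
      rw [mul_assoc, ← hQcommAll x hx, ← mul_assoc, sub_mul, habQ a ha b hb, sub_self, zero_mul]
    have hQK : ∀ v, Matrix.toEuclideanLin Q v ∈ commKer U := by
      intro v
      rw [mem_commKer]
      intro a ha b hb x hx
      rw [← LinearMap.comp_apply, ← toEuclideanLin_mul', hxQ a ha b hb x hx, map_zero]
      rfl
    apply Matrix.toEuclideanLin.injective
    rw [toEuclideanLin_mul']
    exact LinearMap.ext fun v => hfixK _ (hQK v)
  refine ⟨Pc, hH, hIdem, ?_, ?_, hmax, ?_⟩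
  · exact (kron_comm_iff U Pc).mpr fun f g => hPcComm _ (hslice f g)
  · -- compressed commutativity
    intro a ha b hb
    have key : ∀ a ∈ envAlg U, ∀ b ∈ envAlg U,
        (Pc * a * Pc) * (Pc * b * Pc) = (a * b) * Pc := by
      intro a ha b hb
      rw [hPcComm a ha, mul_assoc a Pc Pc, hIdem, hPcComm b hb, mul_assoc b Pc Pc, hIdem]
      rw [mul_assoc a Pc (b * Pc), ← mul_assoc Pc b Pc, hPcComm b hb, mul_assoc b Pc Pc, hIdem,
        ← mul_assoc]
    rw [key a ha b hb, key b hb a ha, ← sub_eq_zero, ← sub_mul, hPcKer a ha b hb]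
  · -- no commutative projection orthogonal to Pc
    rintro ⟨Q, hQ, hQPc⟩
    have h1 := hmax Q hQ
    have h2 := congrArg Matrix.conjTranspose h1
    rw [Matrix.conjTranspose_mul, hH, hQ.2.1] at h2
    exact hQ.1 (by rw [← h2, hQPc])
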